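/- Let H be a connected k-uniform hypergraph with k ≥ 3. Then the smallest signless Laplacian eigenvalue of H is strictly positive (it cannot be zero). -/

import Mathlib

open Finset

/-- The set of hyperedges containing both `i` and `j`. -/
def edgesBetween {n : ℕ} (E : Finset (Finset (Fin n))) (i j : Fin n) :
    Finset (Finset (Fin n)) :=
  E.filter fun e => i ∈ e ∧ j ∈ e

/-- The degree of vertex `i`: the number of hyperedges containing `i`. -/
def hdeg {n : ℕ} (E : Finset (Finset (Fin n))) (i : Fin n) : ℕ :=
  (E.filter fun e => i ∈ e).card

/-- Two (distinct) vertices are adjacent if some hyperedge contains both. -/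
def Adj {n : ℕ} (E : Finset (Finset (Fin n))) (i j : Fin n) : Prop :=
  i ≠ j ∧ ∃ e ∈ E, i ∈ e ∧ j ∈ e

/-- The neighbours of a vertex. -/
noncomputable def neighbors {n : ℕ} (E : Finset (Finset (Fin n))) (i : Fin n) :
    Finset (Fin n) :=
  @Finset.filter _ (fun j => Adj E i j) (Classical.decPred _) Finset.univ

/-- Banerjee's adjacency matrix of a hypergraph: `A i j = ∑_{e ∋ i,j} 1/(|e|-1)`. -/
noncomputable def adjMat {n : ℕ} (E : Finset (Finset (Fin n))) :
    Matrix (Fin n) (Fin n) ℝ :=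
  Matrix.of fun i j =>
    if i = j then 0 else ∑ e ∈ edgesBetween E i j, 1 / ((e.card : ℝ) - 1)

/-- The signless Laplacian matrix `Q = D + A`. -/
noncomputable def signlessLap {n : ℕ} (E : Finset (Finset (Fin n))) :
    Matrix (Fin n) (Fin n) ℝ :=
  Matrix.diagonal (fun i => (hdeg E i : ℝ)) + adjMat E

/-- Largest eigenvalue of a real matrix. -/
noncomputable def qmax {n : ℕ} (M : Matrix (Fin n) (Fin n) ℝ) : ℝ :=
  sSup (spectrum ℝ M)

/-- Smallest eigenvalue of a real matrix. -/
noncomputable def qmin {n : ℕ} (M : Matrix (Fin n) (Fin n) ℝ) : ℝ :=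
  sInf (spectrum ℝ M)

/-- A hypergraph is `k`-uniform if every hyperedge has exactly `k` vertices. -/
def IsUniform {n : ℕ} (k : ℕ) (E : Finset (Finset (Fin n))) : Prop :=
  ∀ e ∈ E, e.card = k

/-- A hypergraph is connected if any two vertices are joined by a walk. -/
def Conn {n : ℕ} (E : Finset (Finset (Fin n))) : Prop :=
  ∀ i j : Fin n, Relation.ReflTransGen (Adj E) i j

/-! ### Auxiliary lemmas -/

open Matrix

lemma spectrum_pos_of_posDef {n : ℕ} (M : Matrix (Fin n) (Fin n) ℝ) (hM : M.PosDef)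
    {μ : ℝ} (hμ : μ ∈ spectrum ℝ M) : 0 < μ := by
  rw [spectrum.mem_iff] at hμ
  have hdet : (algebraMap ℝ (Matrix (Fin n) (Fin n) ℝ) μ - M).det = 0 := by
    by_contra h
    exact hμ ((Matrix.isUnit_iff_isUnit_det _).mpr (isUnit_iff_ne_zero.mpr h))
  obtain ⟨v, hv, hveq⟩ := (Matrix.exists_mulVec_eq_zero_iff).mpr hdet
  have hMv : M *ᵥ v = μ • v := by
    rw [Matrix.sub_mulVec] at hveq
    have h1 : (algebraMap ℝ (Matrix (Fin n) (Fin n) ℝ) μ) *ᵥ v = μ • v := by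
      simp [Algebra.algebraMap_eq_smul_one, Matrix.smul_mulVec, Matrix.one_mulVec]
    rw [h1] at hveq
    exact (sub_eq_zero.mp hveq).symm
  have hq := hM.dotProduct_mulVec_pos hv
  rw [hMv] at hq
  have heq : dotProduct (star v) (μ • v) = μ * (dotProduct v v) := by
    simp [dotProduct, Finset.mul_sum, mul_comm, mul_left_comm]
  rw [heq] at hq
  have hvv : 0 < dotProduct v v := by
    obtain ⟨i, hi⟩ := Function.ne_iff.mp hv
    exact Finset.sum_pos' (fun j _ => mul_self_nonneg _)
      ⟨i, Finset.mem_univ i, mul_self_pos.mpr (by simpa using hi)⟩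
  rcases mul_pos_iff.mp hq with h | h
  · exact h.1
  · exact absurd hvv (not_lt.mpr h.2.le)

lemma sum_pairs {n : ℕ} (e : Finset (Fin n)) (x : Fin n → ℝ) :
    ∑ i ∈ e, ∑ j ∈ e, (if i = j then 0 else x i * x j)
      = (∑ i ∈ e, x i)^2 - ∑ i ∈ e, x i * x i := by
  have h1 : ∀ i ∈ e, ∑ j ∈ e, (if i = j then 0 else x i * x j)
      = x i * (∑ j ∈ e, x j) - x i * x i := by
    intro i hi
    have h2 : ∀ j, (if i = j then 0 else x i * x j)
        = x i * x j - (if i = j then x i * x j else 0) := by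
      intro j; by_cases h : i = j <;> simp [h]
    simp only [h2, Finset.sum_sub_distrib, Finset.sum_ite_eq, hi, if_pos,
      Finset.mul_sum]
  rw [Finset.sum_congr rfl h1, Finset.sum_sub_distrib, ← Finset.sum_mul, sq]

lemma diag_part {n : ℕ} (E : Finset (Finset (Fin n))) (x : Fin n → ℝ) :
    dotProduct x (Matrix.diagonal (fun i => (hdeg E i : ℝ)) *ᵥ x)
      = ∑ e ∈ E, ∑ i ∈ e, x i * x i := by
  simp only [dotProduct, Matrix.mulVec_diagonal, hdeg]
  have h1 : ∀ i : Fin n, x i * ((((E.filter fun e => i ∈ e).card : ℝ)) * x i)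
      = ∑ e ∈ E, (if i ∈ e then x i * x i else 0) := by
    intro i
    rw [← Finset.sum_filter, Finset.sum_const, nsmul_eq_mul]
    ring
  rw [Finset.sum_congr rfl (fun i _ => h1 i), Finset.sum_comm]
  refine Finset.sum_congr rfl fun e _ => ?_
  rw [Finset.sum_ite_mem, Finset.univ_inter]

lemma adj_part {n : ℕ} (E : Finset (Finset (Fin n))) (x : Fin n → ℝ) :
    dotProduct x (adjMat E *ᵥ x)
      = ∑ e ∈ E, (1 / ((e.card : ℝ) - 1)) * ((∑ i ∈ e, x i)^2 - ∑ i ∈ e, x i * x i) := by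
  simp only [dotProduct, Matrix.mulVec, adjMat, Matrix.of_apply]
  have h1 : ∀ i : Fin n,
      x i * ∑ j : Fin n, (if i = j then 0
          else ∑ e ∈ edgesBetween E i j, 1 / ((e.card : ℝ) - 1)) * x j
      = ∑ e ∈ E, ∑ j : Fin n, (if i ∈ e ∧ j ∈ e then
          (if i = j then 0 else (1 / ((e.card : ℝ) - 1)) * (x i * x j)) else 0) := by
    intro i
    rw [Finset.sum_comm, Finset.mul_sum]
    refine Finset.sum_congr rfl fun j _ => ?_
    by_cases h : i = j
    · simp [h]
    · simp only [if_neg h]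
      rw [edgesBetween, Finset.sum_filter, Finset.sum_mul, Finset.mul_sum]
      refine Finset.sum_congr rfl fun e _ => ?_
      by_cases he : i ∈ e ∧ j ∈ e <;> simp [he] <;> ring
  rw [Finset.sum_congr rfl (fun i _ => h1 i), Finset.sum_comm]
  refine Finset.sum_congr rfl fun e _ => ?_
  have h2 : ∀ i : Fin n, ∑ j : Fin n, (if i ∈ e ∧ j ∈ e then
        (if i = j then 0 else (1 / ((e.card : ℝ) - 1)) * (x i * x j)) else 0)
      = if i ∈ e then ∑ j ∈ e, (if i = j then 0
          else (1 / ((e.card : ℝ) - 1)) * (x i * x j)) else 0 := by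
    intro i
    by_cases hi : i ∈ e
    · simp only [hi, true_and, if_true]
      rw [Finset.sum_ite_mem, Finset.univ_inter]
    · simp [hi]
  rw [Finset.sum_congr rfl (fun i _ => h2 i), Finset.sum_ite_mem,
    Finset.univ_inter]
  have h3 : ∑ i ∈ e, ∑ j ∈ e, (if i = j then 0
      else (1 / ((e.card : ℝ) - 1)) * (x i * x j))
      = (1 / ((e.card : ℝ) - 1)) * ∑ i ∈ e, ∑ j ∈ e, (if i = j then 0 else x i * x j) := by
    rw [Finset.mul_sum]
    refine Finset.sum_congr rfl fun i _ => ?_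
    rw [Finset.mul_sum]
    refine Finset.sum_congr rfl fun j _ => ?_
    by_cases h : i = j <;> simp [h]
  rw [h3, sum_pairs]

lemma signlessLap_isHermitian {n : ℕ} (E : Finset (Finset (Fin n))) :
    (signlessLap E).IsHermitian := by
  refine Matrix.IsHermitian.add (Matrix.isHermitian_diagonal _) ?_
  show (adjMat E)ᴴ = adjMat E
  ext i j
  simp only [Matrix.conjTranspose_apply, adjMat, Matrix.of_apply, star_trivial]
  have : edgesBetween E j i = edgesBetween E i j := by
    unfold edgesBetween
    apply Finset.filter_congr
    intro e _
    exact and_comm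
  rw [this]
  by_cases h : i = j
  · simp [h]
  · rw [if_neg h, if_neg (fun hji => h hji.symm)]

lemma signlessLap_posDef {n k : ℕ} (hk : 3 ≤ k) (E : Finset (Finset (Fin n)))
    (hE : E.Nonempty) (hU : IsUniform k E) (hc : Conn E) :
    (signlessLap E).PosDef := by
  refine Matrix.PosDef.of_dotProduct_mulVec_pos (signlessLap_isHermitian E) fun x hx => ?_
  have hstar : star x = x := funext fun i => star_trivial _
  rw [hstar]
  have hquad : dotProduct x (signlessLap E *ᵥ x)
      = ∑ e ∈ E, ((∑ i ∈ e, x i * x i)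
          + (1 / (((k:ℝ)) - 1)) * ((∑ i ∈ e, x i)^2 - ∑ i ∈ e, x i * x i)) := by
    unfold signlessLap
    rw [Matrix.add_mulVec, dotProduct_add, diag_part, adj_part,
      ← Finset.sum_add_distrib]
    refine Finset.sum_congr rfl fun e he => ?_
    rw [hU e he]
  rw [hquad]
  -- basic numeric facts
  have hk1 : (0:ℝ) < (k:ℝ) - 1 := by
    have : (3:ℝ) ≤ (k:ℝ) := by exact_mod_cast hk
    linarith
  have hk2 : (0:ℝ) < (k:ℝ) - 2 := by
    have : (3:ℝ) ≤ (k:ℝ) := by exact_mod_cast hk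
    linarith
  have hterm : ∀ e : Finset (Fin n),
      (∑ i ∈ e, x i * x i) + (1 / (((k:ℝ)) - 1)) * ((∑ i ∈ e, x i)^2 - ∑ i ∈ e, x i * x i)
        = (((k:ℝ) - 2) * (∑ i ∈ e, x i * x i) + (∑ i ∈ e, x i)^2) / ((k:ℝ) - 1) := by
    intro e
    field_simp
    ring
  have hnonneg : ∀ e ∈ E, 0 ≤ (∑ i ∈ e, x i * x i)
      + (1 / (((k:ℝ)) - 1)) * ((∑ i ∈ e, x i)^2 - ∑ i ∈ e, x i * x i) := by
    intro e _
    rw [hterm e]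
    apply div_nonneg _ hk1.le
    have h1 : 0 ≤ ∑ i ∈ e, x i * x i := Finset.sum_nonneg fun i _ => mul_self_nonneg _
    nlinarith [sq_nonneg (∑ i ∈ e, x i)]
  -- find a vertex with nonzero coordinate and an edge containing it
  obtain ⟨i, hi⟩ := Function.ne_iff.mp hx
  have hi' : x i ≠ 0 := by simpa using hi
  obtain ⟨e0, he0⟩ := hE
  have hcard : e0.card = k := hU e0 he0
  have hne0 : e0.Nonempty := Finset.card_pos.mp (by omega)
  obtain ⟨j0, hj0⟩ := hne0
  have hedge : ∃ e ∈ E, i ∈ e := by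
    by_cases h : i = j0
    · exact ⟨e0, he0, h ▸ hj0⟩
    · rcases (Relation.ReflTransGen.cases_head (hc i j0)) with h' | ⟨c, hadj, _⟩
      · exact absurd h' h
      · obtain ⟨_, e, heE, hie, _⟩ := hadj
        exact ⟨e, heE, hie⟩
  obtain ⟨e, heE, hie⟩ := hedge
  refine Finset.sum_pos' hnonneg ⟨e, heE, ?_⟩
  rw [hterm e]
  apply div_pos _ hk1
  have hP : 0 < ∑ i' ∈ e, x i' * x i' := by
    refine Finset.sum_pos' (fun j _ => mul_self_nonneg _)
      ⟨i, hie, mul_self_pos.mpr hi'⟩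
  nlinarith [sq_nonneg (∑ i' ∈ e, x i')]

theorem stmt_9 (n k : ℕ) (hk : 3 ≤ k) (E : Finset (Finset (Fin n)))
    (hE : E.Nonempty) (hU : IsUniform k E) (hc : Conn E) :
    0 < qmin (signlessLap E) := by
  have hpd := signlessLap_posDef hk E hE hU hc
  have hn : 0 < n := by
    obtain ⟨e0, he0⟩ := hE
    have hcard : e0.card = k := hU e0 he0
    have : e0.Nonempty := Finset.card_pos.mp (by omega)
    obtain ⟨j0, _⟩ := this
    exact j0.pos
  have hne : (spectrum ℝ (signlessLap E)).Nonempty :=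
    ⟨_, hpd.1.eigenvalues_mem_spectrum_real ⟨0, hn⟩⟩
  have hfin : (spectrum ℝ (signlessLap E)).Finite := Matrix.finite_spectrum _
  have hmem : qmin (signlessLap E) ∈ spectrum ℝ (signlessLap E) :=
    hne.csInf_mem hfin
  exact spectrum_pos_of_posDef _ hpd hmem
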